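/- Let $\sigma = (a_1,\dots,a_s)$ be a partition of $r$ such that some subset $A \subseteq \{1,\dots,s\}$ satisfies $\gcd\big(\sum_{j\in A} a_j,\; r\big) = 1$ (an $r$-good partition). Set $a = \sum_{j \in A} a_j$, $b = r - a$, $L = \mathrm{lcm}(a,b)$. If $r \mid n$ and $L \mid q$, then the $\sigma$-hypergraph $H = H(n, r, q \mid \sigma)$ has a perfect matching, i.e. $\nu(H) = \frac{nq}{r}$. -/

import Mathlib

open Finset

namespace Stmt11Aux

variable {s : ℕ}

def ofs (σ : Fin s → ℕ) (S : Finset (Fin s)) (j : Fin s) : ℕ :=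
  ∑ j' ∈ S.filter (fun j' => j' < j), σ j'

lemma ofs_lt_add (σ : Fin s → ℕ) (S : Finset (Fin s)) {j j' : Fin s}
    (hj : j ∈ S) (h : j < j') : ofs σ S j + σ j ≤ ofs σ S j' := by
  have hnotmem : j ∉ S.filter (fun x => x < j) := by simp
  have hsub : insert j (S.filter (fun x => x < j)) ⊆ S.filter (fun x => x < j') := by
    intro x hx
    rcases Finset.mem_insert.mp hx with rfl | hx
    · exact Finset.mem_filter.mpr ⟨hj, h⟩
    · rcases Finset.mem_filter.mp hx with ⟨h1, h2⟩
      exact Finset.mem_filter.mpr ⟨h1, lt_trans h2 h⟩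
  calc ofs σ S j + σ j = ∑ x ∈ insert j (S.filter (fun x => x < j)), σ x := by
        rw [Finset.sum_insert hnotmem]; exact (Nat.add_comm _ _)
    _ ≤ _ := Finset.sum_le_sum_of_subset hsub

lemma ofs_add_le (σ : Fin s → ℕ) (S : Finset (Fin s)) {j : Fin s}
    (hj : j ∈ S) : ofs σ S j + σ j ≤ ∑ j' ∈ S, σ j' := by
  have hnotmem : j ∉ S.filter (fun x => x < j) := by simp
  have hsub : insert j (S.filter (fun x => x < j)) ⊆ S := by
    intro x hx
    rcases Finset.mem_insert.mp hx with rfl | hx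
    · exact hj
    · exact (Finset.mem_filter.mp hx).1
  calc ofs σ S j + σ j = ∑ x ∈ insert j (S.filter (fun x => x < j)), σ x := by
        rw [Finset.sum_insert hnotmem]; exact (Nat.add_comm _ _)
    _ ≤ _ := Finset.sum_le_sum_of_subset hsub

lemma ofs_unique (σ : Fin s → ℕ) (S : Finset (Fin s)) {j j' : Fin s} {p : ℕ}
    (hj : j ∈ S) (hj' : j' ∈ S)
    (h1 : ofs σ S j ≤ p) (h2 : p < ofs σ S j + σ j)
    (h1' : ofs σ S j' ≤ p) (h2' : p < ofs σ S j' + σ j') : j = j' := by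
  rcases lt_trichotomy j j' with h | h | h
  · exact absurd (ofs_lt_add σ S hj h) (by omega)
  · exact h
  · exact absurd (ofs_lt_add σ S hj' h) (by omega)

lemma ofs_cover (σ : Fin s → ℕ) (S : Finset (Fin s)) {p : ℕ}
    (hp : p < ∑ j ∈ S, σ j) :
    ∃ j ∈ S, ofs σ S j ≤ p ∧ p < ofs σ S j + σ j := by
  set T := S.biUnion (fun j => Finset.Ico (ofs σ S j) (ofs σ S j + σ j)) with hT
  have hdisj : ∀ x ∈ S, ∀ y ∈ S, x ≠ y →
      Disjoint (Finset.Ico (ofs σ S x) (ofs σ S x + σ x))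
        (Finset.Ico (ofs σ S y) (ofs σ S y + σ y)) := by
    intro x hx y hy hxy
    rw [Finset.disjoint_left]
    intro m hm hm'
    rw [Finset.mem_Ico] at hm hm'
    exact hxy (ofs_unique σ S hx hy hm.1 hm.2 hm'.1 hm'.2)
  have hcard : T.card = ∑ j ∈ S, σ j := by
    rw [hT, Finset.card_biUnion hdisj]
    exact Finset.sum_congr rfl (fun j _ => by rw [Nat.card_Ico]; omega)
  have hsub : T ⊆ Finset.range (∑ j ∈ S, σ j) := by
    intro x hx
    rw [hT, Finset.mem_biUnion] at hx
    obtain ⟨j, hj, hx⟩ := hx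
    rw [Finset.mem_Ico] at hx
    have := ofs_add_le σ S hj
    exact Finset.mem_range.mpr (by omega)
  have heq : T = Finset.range (∑ j ∈ S, σ j) :=
    Finset.eq_of_subset_of_card_le hsub (by rw [Finset.card_range, hcard])
  have hpT : p ∈ T := by rw [heq]; exact Finset.mem_range.mpr hp
  rw [hT, Finset.mem_biUnion] at hpT
  obtain ⟨j, hj, hx⟩ := hpT
  rw [Finset.mem_Ico] at hx
  exact ⟨j, hj, hx.1, hx.2⟩

/-- the side-set of part `j` -/
def sd (A : Finset (Fin s)) (j : Fin s) : Finset (Fin s) := if j ∈ A then A else Aᶜ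

def offf (σ : Fin s → ℕ) (A : Finset (Fin s)) (j : Fin s) : ℕ := ofs σ (sd A j) j

def mdf (σ : Fin s → ℕ) (A : Finset (Fin s)) (j : Fin s) : ℕ := ∑ j' ∈ sd A j, σ j'

def bsf (σ : Fin s → ℕ) (A : Finset (Fin s)) (j : Fin s) : ℕ :=
  if j ∈ A then 0 else ∑ j' ∈ A, σ j'

def clsv (σ : Fin s → ℕ) (A : Finset (Fin s)) (r k t : ℕ) (j : Fin s) : ℕ :=
  k * r + bsf σ A j + (offf σ A j + t) % mdf σ A j

def vlo (σ : Fin s → ℕ) (A : Finset (Fin s)) (t : ℕ) (j : Fin s) : ℕ :=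
  mdf σ A j * (t / mdf σ A j) + offf σ A j

def edgeSet (n q : ℕ) (σ : Fin s → ℕ) (A : Finset (Fin s)) (r k t : ℕ) :
    Finset (Fin n × Fin q) :=
  Finset.univ.filter (fun v => ∃ j : Fin s, v.1.val = clsv σ A r k t j ∧
    vlo σ A t j ≤ v.2.val ∧ v.2.val < vlo σ A t j + σ j)

lemma mem_edgeSet {n q : ℕ} {σ : Fin s → ℕ} {A : Finset (Fin s)} {r k t : ℕ}
    {v : Fin n × Fin q} :
    v ∈ edgeSet n q σ A r k t ↔ ∃ j : Fin s, v.1.val = clsv σ A r k t j ∧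
      vlo σ A t j ≤ v.2.val ∧ v.2.val < vlo σ A t j + σ j := by
  simp [edgeSet]

lemma mem_sd_self (A : Finset (Fin s)) (j : Fin s) : j ∈ sd A j := by
  unfold sd; split
  · assumption
  · simpa using (by assumption)

lemma sd_eq_of_iff {A : Finset (Fin s)} {j j' : Fin s} (h : j ∈ A ↔ j' ∈ A) :
    sd A j = sd A j' := by
  unfold sd
  by_cases hj : j ∈ A
  · rw [if_pos hj, if_pos (h.mp hj)]
  · rw [if_neg hj, if_neg (fun hj' => hj (h.mpr hj'))]

lemma card_slab {n q : ℕ} (c : Fin n) (lo hi : ℕ) (hhi : hi ≤ q) :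
    ((Finset.univ : Finset (Fin n × Fin q)).filter
      (fun v => v.1 = c ∧ lo ≤ v.2.val ∧ v.2.val < hi)).card = hi - lo := by
  rw [← Nat.card_Ico lo hi]
  apply Finset.card_bij (fun v _ => v.2.val)
  · intro v hv
    rw [Finset.mem_filter] at hv
    exact Finset.mem_Ico.mpr ⟨hv.2.2.1, hv.2.2.2⟩
  · intro v hv w hw hvw
    rw [Finset.mem_filter] at hv hw
    exact Prod.ext (hv.2.1.trans hw.2.1.symm) (Fin.ext hvw)
  · intro m hm
    rw [Finset.mem_Ico] at hm
    exact ⟨(c, ⟨m, lt_of_lt_of_le hm.2 hhi⟩), by simp [hm.1, hm.2], rfl⟩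

end Stmt11Aux

open Stmt11Aux

/-- `K` is an edge of the σ-hypergraph `H(n,r,q | σ)` (with σ given by `a : Fin s → ℕ`). -/
def isEdge {n q s : ℕ} (a : Fin s → ℕ) (K : Finset (Fin n × Fin q)) : Prop :=
  Multiset.filter (fun x => x ≠ 0)
      (Multiset.map (fun i => (K.filter (fun v => v.1 = i)).card)
        (Finset.univ : Finset (Fin n)).val)
    = Multiset.map a (Finset.univ : Finset (Fin s)).val

/-- `M` is a matching: a collection of pairwise disjoint edges. -/
def isMatching {n q s : ℕ} (a : Fin s → ℕ) (M : Finset (Finset (Fin n × Fin q))) : Prop :=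
  (∀ E ∈ M, isEdge a E) ∧ ∀ E ∈ M, ∀ F ∈ M, E ≠ F → Disjoint E F

theorem stmt_11 (n r q s a b L : ℕ) (σ : Fin s → ℕ) (A : Finset (Fin s))
    (hs : 1 ≤ s)
    (hpos : ∀ i, 1 ≤ σ i)
    (hmono : ∀ i j : Fin s, i ≤ j → σ j ≤ σ i)
    (hsum : ∑ i, σ i = r)
    (ha : a = ∑ j ∈ A, σ j)
    (hgood : Nat.gcd a r = 1)
    (hb : b = r - a)
    (hL : L = Nat.lcm a b)
    (hrn : r ∣ n) (hLq : L ∣ q) :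
    ∃ M : Finset (Finset (Fin n × Fin q)),
      isMatching σ M ∧
      M.card * r = n * q ∧
      ∀ v : Fin n × Fin q, ∃ E ∈ M, v ∈ E := by
  classical
  rcases Nat.eq_zero_or_pos q with hq | hq
  · subst hq
    refine ⟨∅, ⟨?_, ?_⟩, by simp, ?_⟩
    · intro E hE; exact absurd hE (Finset.notMem_empty E)
    · intro E hE; exact absurd hE (Finset.notMem_empty E)
    · intro v; exact (Nat.not_lt_zero _ v.2.isLt).elim
  -- main case q > 0
  set K := n / r with hK
  have hsumA : ∑ j ∈ A, σ j = a := ha.symm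
  have haler : a ≤ r := by
    rw [ha, ← hsum]
    exact Finset.sum_le_sum_of_subset (Finset.subset_univ A)
  have hsumB : ∑ j ∈ Aᶜ, σ j = b := by
    have h := Finset.sum_add_sum_compl A σ
    omega
  have haq : a ∣ q := dvd_trans (Nat.dvd_lcm_left a b) (hL ▸ hLq)
  have hbq : b ∣ q := dvd_trans (Nat.dvd_lcm_right a b) (hL ▸ hLq)
  have ha0 : 0 < a := by
    rcases Nat.eq_zero_or_pos a with h | h
    · subst h; rw [zero_dvd_iff] at haq; omega
    · exact h
  have hb0 : 0 < b := by
    rcases Nat.eq_zero_or_pos b with h | h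
    · subst h; rw [zero_dvd_iff] at hbq; omega
    · exact h
  have habr : a + b = r := by omega
  have hr0 : 0 < r := by omega
  have hnK : n = r * K := (Nat.mul_div_cancel' hrn).symm
  -- basic facts about the side data
  have hmd : ∀ j, mdf σ A j = if j ∈ A then a else b := by
    intro j
    unfold mdf sd
    by_cases hj : j ∈ A
    · rw [if_pos hj, if_pos hj, hsumA]
    · rw [if_neg hj, if_neg hj, hsumB]
  have hbsv : ∀ j, bsf σ A j = if j ∈ A then 0 else a := by
    intro j
    unfold bsf
    by_cases hj : j ∈ A
    · rw [if_pos hj, if_pos hj]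
    · rw [if_neg hj, if_neg hj, hsumA]
  have hmd0 : ∀ j, 0 < mdf σ A j := by
    intro j; rw [hmd j]; split
    · exact ha0
    · exact hb0
  have hmdq : ∀ j, mdf σ A j ∣ q := by
    intro j; rw [hmd j]; split
    · exact haq
    · exact hbq
  have hbm : ∀ j, bsf σ A j + mdf σ A j ≤ r := by
    intro j; rw [hmd j, hbsv j]
    by_cases hj : j ∈ A
    · rw [if_pos hj, if_pos hj]; omega
    · rw [if_neg hj, if_neg hj]; omega
  have hoffs : ∀ j, offf σ A j + σ j ≤ mdf σ A j := fun j =>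
    ofs_add_le σ (sd A j) (mem_sd_self A j)
  have hofflt : ∀ j, offf σ A j < mdf σ A j := by
    intro j; have h1 := hoffs j; have h2 := hpos j; omega
  have hclsb : ∀ k t (j : Fin s), k < K → clsv σ A r k t j < n := by
    intro k t j hk
    have h1 : (offf σ A j + t) % mdf σ A j < mdf σ A j := Nat.mod_lt _ (hmd0 j)
    have h2 := hbm j
    have h3 : k * r + r ≤ n := by
      rw [hnK]
      calc k * r + r = (k + 1) * r := by ring
        _ ≤ K * r := Nat.mul_le_mul_right r hk
        _ = r * K := Nat.mul_comm _ _
    unfold clsv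
    omega
  have hvloq : ∀ t (j : Fin s), t < q → vlo σ A t j + σ j ≤ q := by
    intro t j ht
    have h1 := hoffs j
    have h2 : t / mdf σ A j < q / mdf σ A j := Nat.div_lt_div_of_lt_of_dvd (hmdq j) ht
    calc vlo σ A t j + σ j
        = mdf σ A j * (t / mdf σ A j) + (offf σ A j + σ j) := by unfold vlo; ring
      _ ≤ mdf σ A j * (t / mdf σ A j) + mdf σ A j := by omega
      _ = mdf σ A j * (t / mdf σ A j + 1) := by ring
      _ ≤ mdf σ A j * (q / mdf σ A j) := Nat.mul_le_mul_left _ (by omega)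
      _ = q := Nat.mul_div_cancel' (hmdq j)
  have hside : ∀ t (j : Fin s), j ∈ A ↔ bsf σ A j + (offf σ A j + t) % mdf σ A j < a := by
    intro t j
    constructor
    · intro hjA
      rw [hbsv j, hmd j, if_pos hjA, if_pos hjA]
      have h1 : (offf σ A j + t) % a < a := Nat.mod_lt _ ha0
      omega
    · intro hlt
      by_contra hjA
      rw [hbsv j, if_neg hjA] at hlt
      omega
  -- uniqueness of (j, t) from class value and overlapping vertex interval
  have huniq : ∀ t t' (j j' : Fin s) (w : ℕ),
      bsf σ A j + (offf σ A j + t) % mdf σ A j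
        = bsf σ A j' + (offf σ A j' + t') % mdf σ A j' →
      vlo σ A t j ≤ w → w < vlo σ A t j + σ j →
      vlo σ A t' j' ≤ w → w < vlo σ A t' j' + σ j' →
      j = j' ∧ t = t' := by
    intro t t' j j' w hcls hl hu hl' hu'
    have hiff : j ∈ A ↔ j' ∈ A := by rw [hside t j, hside t' j', hcls]
    have hsd : sd A j = sd A j' := sd_eq_of_iff hiff
    have hmm : mdf σ A j' = mdf σ A j := by unfold mdf; rw [hsd]
    have hbb : bsf σ A j' = bsf σ A j := by
      rw [hbsv j, hbsv j']
      by_cases hj : j ∈ A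
      · rw [if_pos hj, if_pos (hiff.mp hj)]
      · rw [if_neg hj, if_neg (fun h => hj (hiff.mpr h))]
    rw [hmm, hbb] at hcls
    have hrem : (offf σ A j + t) % mdf σ A j = (offf σ A j' + t') % mdf σ A j :=
      Nat.add_left_cancel hcls
    -- div/mod structure of w
    have hwt : w / mdf σ A j = t / mdf σ A j := by
      unfold vlo at hl hu
      apply Nat.div_eq_of_lt_le
      · rw [Nat.mul_comm]; omega
      · rw [add_one_mul, Nat.mul_comm]
        have := hoffs j
        omega
    have hwt' : w / mdf σ A j = t' / mdf σ A j := by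
      unfold vlo at hl' hu'
      rw [hmm] at hl' hu'
      apply Nat.div_eq_of_lt_le
      · rw [Nat.mul_comm]; omega
      · rw [add_one_mul, Nat.mul_comm]
        have h1 := hoffs j'
        rw [hmm] at h1
        omega
    have hwdm := Nat.div_add_mod w (mdf σ A j)
    have hwm1 : offf σ A j ≤ w % mdf σ A j ∧ w % mdf σ A j < offf σ A j + σ j := by
      unfold vlo at hl hu
      rw [← hwt] at hl hu
      omega
    have hwm2 : offf σ A j' ≤ w % mdf σ A j ∧ w % mdf σ A j < offf σ A j' + σ j' := by
      unfold vlo at hl' hu'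
      rw [hmm] at hl' hu'
      rw [← hwt'] at hl' hu'
      omega
    have hjmem : j ∈ sd A j := mem_sd_self A j
    have hjmem' : j' ∈ sd A j := by rw [hsd]; exact mem_sd_self A j'
    have hoffj' : offf σ A j' = ofs σ (sd A j) j' := by unfold offf; rw [hsd]
    have hoffjr : offf σ A j = ofs σ (sd A j) j := rfl
    have hjj : j = j' := by
      apply ofs_unique σ (sd A j) hjmem hjmem' (p := w % mdf σ A j)
      · omega
      · omega
      · omega
      · omega
    subst hjj
    have htm : t % mdf σ A j = t' % mdf σ A j := by
      have h2 : t ≡ t' [MOD mdf σ A j] := Nat.ModEq.add_left_cancel' (offf σ A j) hrem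
      exact h2
    have h3 := Nat.div_add_mod t (mdf σ A j)
    have h4 := Nat.div_add_mod t' (mdf σ A j)
    rw [← hwt] at h3
    rw [← hwt'] at h4
    omega
  -- injectivity of the class map for a fixed edge
  have hclsinj : ∀ k t (j j' : Fin s),
      clsv σ A r k t j = clsv σ A r k t j' → j = j' := by
    intro k t j j' h
    unfold clsv at h
    have hcls : bsf σ A j + (offf σ A j + t) % mdf σ A j
        = bsf σ A j' + (offf σ A j' + t) % mdf σ A j' := by omega
    have hiff : j ∈ A ↔ j' ∈ A := by rw [hside t j, hside t j', hcls]
    have hsd : sd A j = sd A j' := sd_eq_of_iff hiff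
    have hmm : mdf σ A j' = mdf σ A j := by unfold mdf; rw [hsd]
    have hbb : bsf σ A j' = bsf σ A j := by
      rw [hbsv j, hbsv j']
      by_cases hj : j ∈ A
      · rw [if_pos hj, if_pos (hiff.mp hj)]
      · rw [if_neg hj, if_neg (fun hx => hj (hiff.mpr hx))]
    rw [hmm, hbb] at hcls
    have hrem : (offf σ A j + t) % mdf σ A j = (offf σ A j' + t) % mdf σ A j :=
      Nat.add_left_cancel hcls
    have h2 : offf σ A j ≡ offf σ A j' [MOD mdf σ A j] :=
      Nat.ModEq.add_right_cancel' t hrem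
    have h5 : offf σ A j % mdf σ A j = offf σ A j' % mdf σ A j := h2
    have h6 := hofflt j
    have h7 := hofflt j'
    rw [hmm] at h7
    rw [Nat.mod_eq_of_lt h6, Nat.mod_eq_of_lt h7] at h5
    have hjmem : j ∈ sd A j := mem_sd_self A j
    have hjmem' : j' ∈ sd A j := by rw [hsd]; exact mem_sd_self A j'
    have hoffj' : offf σ A j' = ofs σ (sd A j) j' := by unfold offf; rw [hsd]
    have hoffjr : offf σ A j = ofs σ (sd A j) j := rfl
    have hp1 := hpos j
    have hp2 := hpos j'
    apply ofs_unique σ (sd A j) hjmem hjmem' (p := offf σ A j)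
    · omega
    · omega
    · omega
    · omega
  -- pairwise disjointness
  have hdisjE : ∀ k t k' t', k < K → t < q → k' < K → t' < q → ¬(k = k' ∧ t = t') →
      Disjoint (edgeSet n q σ A r k t) (edgeSet n q σ A r k' t') := by
    intro k t k' t' hk ht hk' ht' hne
    rw [Finset.disjoint_left]
    intro v hv hv'
    rw [mem_edgeSet] at hv hv'
    obtain ⟨j, hc, hl, hu⟩ := hv
    obtain ⟨j', hc', hl', hu'⟩ := hv'
    have hb1 : bsf σ A j + (offf σ A j + t) % mdf σ A j < r := by
      have h1 : (offf σ A j + t) % mdf σ A j < mdf σ A j := Nat.mod_lt _ (hmd0 j)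
      have h2 := hbm j
      omega
    have hb2 : bsf σ A j' + (offf σ A j' + t') % mdf σ A j' < r := by
      have h1 : (offf σ A j' + t') % mdf σ A j' < mdf σ A j' := Nat.mod_lt _ (hmd0 j')
      have h2 := hbm j'
      omega
    have hq1 : v.1.val / r = k := by
      rw [hc]; unfold clsv
      apply Nat.div_eq_of_lt_le
      · rw [Nat.mul_comm]; omega
      · rw [add_one_mul, Nat.mul_comm]; omega
    have hq2 : v.1.val / r = k' := by
      rw [hc']; unfold clsv
      apply Nat.div_eq_of_lt_le
      · rw [Nat.mul_comm]; omega
      · rw [add_one_mul, Nat.mul_comm]; omega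
    have hkk : k = k' := hq1.symm.trans hq2
    subst hkk
    unfold clsv at hc hc'
    have hcls : bsf σ A j + (offf σ A j + t) % mdf σ A j
        = bsf σ A j' + (offf σ A j' + t') % mdf σ A j' := by omega
    obtain ⟨hjj, htt⟩ := huniq t t' j j' v.2.val hcls hl hu hl' hu'
    exact hne ⟨rfl, htt⟩
  -- counting: the class of part j receives exactly σ j vertices
  have hcount1 : ∀ k t (i : Fin n) (j : Fin s), t < q → i.val = clsv σ A r k t j →
      ((edgeSet n q σ A r k t).filter (fun v => v.1 = i)).card = σ j := by
    intro k t i j ht hij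
    have hset : (edgeSet n q σ A r k t).filter (fun v => v.1 = i) =
        Finset.univ.filter (fun v : Fin n × Fin q =>
          v.1 = i ∧ vlo σ A t j ≤ v.2.val ∧ v.2.val < vlo σ A t j + σ j) := by
      ext v
      simp only [edgeSet, Finset.mem_filter, Finset.mem_univ, true_and]
      constructor
      · rintro ⟨⟨j', hc', hl', hu'⟩, hvi⟩
        have hv1 : v.1.val = i.val := congrArg Fin.val hvi
        have hjj : j' = j := hclsinj k t j' j (hc'.symm.trans (hv1.trans hij))
        subst hjj
        exact ⟨hvi, hl', hu'⟩
      · rintro ⟨hvi, hl, hu⟩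
        exact ⟨⟨j, (congrArg Fin.val hvi).trans hij, hl, hu⟩, hvi⟩
    rw [hset, card_slab i _ _ (hvloq t j ht)]
    omega
  have hcount0 : ∀ k t (i : Fin n), (∀ j : Fin s, i.val ≠ clsv σ A r k t j) →
      ((edgeSet n q σ A r k t).filter (fun v => v.1 = i)).card = 0 := by
    intro k t i hnone
    rw [Finset.card_eq_zero, Finset.filter_eq_empty_iff]
    intro v hv
    rw [mem_edgeSet] at hv
    obtain ⟨j, hc, _, _⟩ := hv
    intro hvi
    exact hnone j ((congrArg Fin.val hvi).symm.trans hc)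
  -- each edge set is an edge of the hypergraph
  have hedge : ∀ k t, k < K → t < q → isEdge σ (edgeSet n q σ A r k t) := by
    intro k t hk ht
    unfold isEdge
    set f : Fin n → ℕ := fun i => ((edgeSet n q σ A r k t).filter (fun v => v.1 = i)).card
      with hf
    set g : Fin s → Fin n := fun j => ⟨clsv σ A r k t j, hclsb k t j hk⟩ with hg
    have hginj : Set.InjOn g (Finset.univ : Finset (Fin s)) := by
      intro x _ y _ hxy
      exact hclsinj k t x y (congrArg Fin.val hxy)
    have hfg : ∀ j, f (g j) = σ j := fun j => hcount1 k t (g j) j ht rfl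
    have him : Finset.univ.filter (fun i : Fin n => ∃ j, g j = i) = Finset.univ.image g := by
      ext i
      simp
    calc Multiset.filter (fun x => x ≠ 0) (Multiset.map f Finset.univ.val)
        = Multiset.filter (fun x => x ≠ 0) (Multiset.map f
            (Multiset.filter (fun i => ∃ j, g j = i) Finset.univ.val +
             Multiset.filter (fun i => ¬ ∃ j, g j = i) Finset.univ.val)) := by
          rw [Multiset.filter_add_not]
      _ = Multiset.filter (fun x => x ≠ 0)
            (Multiset.map f (Multiset.filter (fun i => ∃ j, g j = i) Finset.univ.val)) +
          Multiset.filter (fun x => x ≠ 0)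
            (Multiset.map f (Multiset.filter (fun i => ¬ ∃ j, g j = i) Finset.univ.val)) := by
          rw [Multiset.map_add, Multiset.filter_add]
      _ = Multiset.filter (fun x => x ≠ 0)
            (Multiset.map f (Multiset.filter (fun i => ∃ j, g j = i) Finset.univ.val)) := by
          have hnil : Multiset.filter (fun x => x ≠ 0)
              (Multiset.map f (Multiset.filter (fun i => ¬ ∃ j, g j = i)
                Finset.univ.val)) = 0 := by
            rw [Multiset.filter_eq_nil]
            intro x hx
            obtain ⟨i, hi, rfl⟩ := Multiset.mem_map.mp hx
            rw [Multiset.mem_filter] at hi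
            have hno : ∀ j : Fin s, i.val ≠ clsv σ A r k t j := by
              intro j hj
              exact hi.2 ⟨j, Fin.ext hj.symm⟩
            simp only [ne_eq, not_not]
            exact hcount0 k t i hno
          rw [hnil, add_zero]
      _ = Multiset.filter (fun x => x ≠ 0)
            (Multiset.map f (Multiset.map g Finset.univ.val)) := by
          rw [← Finset.filter_val, him, Finset.image_val_of_injOn hginj]
      _ = Multiset.filter (fun x => x ≠ 0)
            (Multiset.map (fun j => f (g j)) Finset.univ.val) := by
          rw [Multiset.map_map]; rfl
      _ = Multiset.map (fun j => f (g j))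
            (Multiset.filter ((fun x => x ≠ 0) ∘ (fun j => f (g j))) Finset.univ.val) :=
          Multiset.filter_map _ _ _
      _ = Multiset.map (fun j => f (g j)) Finset.univ.val := by
          rw [Multiset.filter_eq_self.mpr]
          intro j _
          have h1 := hfg j
          have h2 := hpos j
          simp only [Function.comp, ne_eq]
          omega
      _ = Multiset.map σ Finset.univ.val := Multiset.map_congr rfl (fun j _ => hfg j)
  -- nonemptiness of each edge
  have hne : ∀ k t, k < K → t < q → (edgeSet n q σ A r k t).Nonempty := by
    intro k t hk ht
    set j0 : Fin s := ⟨0, hs⟩ with hj0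
    have hlt : vlo σ A t j0 < q := by
      have h1 := hvloq t j0 ht
      have h2 := hpos j0
      omega
    refine ⟨(⟨clsv σ A r k t j0, hclsb k t j0 hk⟩, ⟨vlo σ A t j0, hlt⟩), ?_⟩
    rw [mem_edgeSet]
    exact ⟨j0, rfl, le_rfl,
      show vlo σ A t j0 < vlo σ A t j0 + σ j0 by have := hpos j0; omega⟩
  -- covering
  have hcover : ∀ v : Fin n × Fin q, ∃ k t, k < K ∧ t < q ∧ v ∈ edgeSet n q σ A r k t := by
    intro v
    set k := v.1.val / r with hk
    have hkK : k < K := Nat.div_lt_div_of_lt_of_dvd hrn v.1.isLt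
    set i' := v.1.val % r with hi'
    have hi'r : i' < r := Nat.mod_lt _ hr0
    have hvio : v.1.val = k * r + i' := by
      rw [hk, hi', Nat.mul_comm]
      exact (Nat.div_add_mod v.1.val r).symm
    have key : ∀ (S : Finset (Fin s)) (m base : ℕ),
        (∑ j ∈ S, σ j) = m → 0 < m → m ∣ q →
        (∀ j, j ∈ S → mdf σ A j = m ∧ bsf σ A j = base ∧ sd A j = S) →
        ∀ c, c < m → v.1.val = k * r + base + c →
        ∃ t, t < q ∧ v ∈ edgeSet n q σ A r k t := by
      intro S m base hsm hm0 hmq' hprop c hc hvc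
      have hpm : v.2.val % m < ∑ j ∈ S, σ j := by rw [hsm]; exact Nat.mod_lt _ hm0
      obtain ⟨j, hjS, hop1, hop2⟩ := ofs_cover σ S hpm
      obtain ⟨hmj, hbj, hsj⟩ := hprop j hjS
      have hoffj : offf σ A j = ofs σ S j := by unfold offf; rw [hsj]
      have hofflt' : ofs σ S j < m := by
        have h1 := ofs_add_le σ S hjS
        have h2 := hpos j
        omega
      set u := v.2.val / m with hu
      set d := (m + c - ofs σ S j) % m with hd
      have hdm : d < m := Nat.mod_lt _ hm0
      set t := m * u + d with htdef
      have huq : u < q / m := by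
        rw [hu]
        exact Nat.div_lt_div_of_lt_of_dvd hmq' v.2.isLt
      have htq : t < q := by
        have h1 : t < m * (u + 1) := by rw [htdef, Nat.mul_add, Nat.mul_one]; omega
        have h2 : m * (u + 1) ≤ m * (q / m) := Nat.mul_le_mul_left m (by omega)
        have h3 : m * (q / m) = q := Nat.mul_div_cancel' hmq'
        exact lt_of_lt_of_le h1 (h2.trans_eq h3)
      have htdm : t / m = u := by
        rw [htdef, Nat.mul_add_div hm0, Nat.div_eq_of_lt hdm, Nat.add_zero]
      have htmm : t % m = d := by
        rw [htdef, Nat.mul_add_mod, Nat.mod_eq_of_lt hdm]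
      have hremc : (offf σ A j + t) % m = c := by
        rw [hoffj]
        have e0 : t ≡ d [MOD m] := by
          show t % m = d % m
          rw [htmm, Nat.mod_eq_of_lt hdm]
        have e1 : (ofs σ S j + t) % m = (ofs σ S j + d) % m :=
          Nat.ModEq.add_left _ e0
        have e2 : (ofs σ S j + d) % m = (ofs σ S j + (m + c - ofs σ S j)) % m :=
          Nat.ModEq.add_left _ (Nat.mod_modEq _ m)
        have e3 : ofs σ S j + (m + c - ofs σ S j) = m + c := by omega
        rw [e1, e2, e3, Nat.add_mod_left, Nat.mod_eq_of_lt hc]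
      have hv2 : v.2.val = m * u + v.2.val % m := by
        rw [hu]
        exact (Nat.div_add_mod v.2.val m).symm
      refine ⟨t, htq, ?_⟩
      rw [mem_edgeSet]
      refine ⟨j, ?_, ?_, ?_⟩
      · unfold clsv
        rw [hmj, hbj, hremc, hvc]
      · unfold vlo
        rw [hmj, htdm, hoffj, hv2]
        exact Nat.add_le_add_left hop1 _
      · unfold vlo
        rw [hmj, htdm, hoffj]
        calc v.2.val = m * u + v.2.val % m := hv2
          _ < m * u + (ofs σ S j + σ j) := Nat.add_lt_add_left hop2 _
          _ = m * u + ofs σ S j + σ j := by ring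
    by_cases hside' : i' < a
    · obtain ⟨t, ht, hv⟩ := key A a 0 hsumA ha0 haq
        (fun j hj => ⟨by rw [hmd j, if_pos hj], by rw [hbsv j, if_pos hj],
          by unfold sd; rw [if_pos hj]⟩)
        i' hside' (by omega)
      exact ⟨k, t, hkK, ht, hv⟩
    · have hi'b : i' - a < b := by omega
      have hval : v.1.val = k * r + a + (i' - a) := by omega
      obtain ⟨t, ht, hv⟩ := key Aᶜ b a hsumB hb0 hbq
        (fun j hj => by
          have hjA : j ∉ A := Finset.mem_compl.mp hj
          exact ⟨by rw [hmd j, if_neg hjA], by rw [hbsv j, if_neg hjA],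
            by unfold sd; rw [if_neg hjA]⟩)
        (i' - a) hi'b hval
      exact ⟨k, t, hkK, ht, hv⟩
  -- assemble the matching
  refine ⟨(Finset.range K ×ˢ Finset.range q).image (fun p => edgeSet n q σ A r p.1 p.2),
    ⟨?_, ?_⟩, ?_, ?_⟩
  · intro E hE
    obtain ⟨p, hp, rfl⟩ := Finset.mem_image.mp hE
    rw [Finset.mem_product, Finset.mem_range, Finset.mem_range] at hp
    exact hedge p.1 p.2 hp.1 hp.2
  · intro E hE F hF hEF
    obtain ⟨p, hp, rfl⟩ := Finset.mem_image.mp hE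
    obtain ⟨p', hp', rfl⟩ := Finset.mem_image.mp hF
    rw [Finset.mem_product, Finset.mem_range, Finset.mem_range] at hp hp'
    apply hdisjE p.1 p.2 p'.1 p'.2 hp.1 hp.2 hp'.1 hp'.2
    rintro ⟨h1, h2⟩
    exact hEF (by rw [show p = p' from Prod.ext h1 h2])
  · have hinj : Set.InjOn (fun p : ℕ × ℕ => edgeSet n q σ A r p.1 p.2)
        ((Finset.range K ×ˢ Finset.range q) : Finset (ℕ × ℕ)) := by
      intro p hp p' hp' hpp
      rw [Finset.mem_coe, Finset.mem_product, Finset.mem_range, Finset.mem_range] at hp hp'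
      by_contra hne'
      have hd := hdisjE p.1 p.2 p'.1 p'.2 hp.1 hp.2 hp'.1 hp'.2
        (fun h => hne' (Prod.ext h.1 h.2))
      have heq : edgeSet n q σ A r p.1 p.2 = edgeSet n q σ A r p'.1 p'.2 := hpp
      rw [heq] at hd
      obtain ⟨v, hv⟩ := hne p'.1 p'.2 hp'.1 hp'.2
      exact Finset.disjoint_left.mp hd hv hv
    rw [Finset.card_image_of_injOn hinj, Finset.card_product, Finset.card_range,
      Finset.card_range, hnK]
    ring
  · intro v
    obtain ⟨k', t', hk', ht', hv⟩ := hcover v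
    refine ⟨edgeSet n q σ A r k' t', Finset.mem_image.mpr ⟨(k', t'), ?_, rfl⟩, hv⟩
    rw [Finset.mem_product]
    exact ⟨Finset.mem_range.mpr hk', Finset.mem_range.mpr ht'⟩
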